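/- Let U : ℝ → ℝ, let g ∈ ℝ, and suppose U has derivative u′ at g (HasDerivAt), that U(g) ≠ 0, and that 2g·U(g)² + U(g) − 1 = 0. Then the function x ↦ U(x) + x·U(x)² − log U(x) has derivative U(g)² at g. -/

import Mathlib

/-- If `U` has derivative `u'` at `g`, `U g ≠ 0` and `2g·U(g)² + U(g) - 1 = 0`, then
`x ↦ U x + x·U(x)² - log U(x)` has derivative `U(g)²` at `g`. -/
theorem stmt_10 (U : ℝ → ℝ) (g u' : ℝ) (hU : HasDerivAt U u' g)
    (hUg : U g ≠ 0) (hsd : 2 * g * U g ^ 2 + U g - 1 = 0) :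
    HasDerivAt (fun x : ℝ => U x + x * U x ^ 2 - Real.log (U x)) (U g ^ 2) g := by
  have h := ((hU.add (((hasDerivAt_id g).mul (hU.pow 2)))).sub (hU.log hUg))
  refine h.congr_deriv ?_
  simp only [id, Pi.pow_apply]
  field_simp
  linear_combination u' * hsd
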